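/- Let H be an inner product space over ℂ, n ≥ 1, x₁,…,xₙ, y₁,…,yₙ ∈ H, m ∈ {1,…,n}, a, b ∈ H, r, s ≥ 0. Suppose ‖xₖ − a‖ ≤ r and ‖k^{m−1}·yₖ − b‖ ≤ s for all k ∈ {1,…,n}. Define the discrete Mellin transform M(y)(m) = ∑ₖ k^{m−1} yₖ and M(x,y)(m) = ∑ₖ k^{m−1}⟨xₖ, yₖ⟩. Then |M(x,y)(m) − ⟨(1/n)∑ₖ xₖ, M(y)(m)⟩| ≤ n·r·s. -/

import Mathlib

open scoped InnerProductSpace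
open Finset

/-- The mean minimizes the sum of squared distances. -/
lemma mean_min_sq_dist {H : Type*} [NormedAddCommGroup H] [InnerProductSpace ℂ H]
    (t : Finset ℕ) (ht : t.Nonempty) (v : ℕ → H) (w : H) :
    ∑ k ∈ t, ‖v k - (1 / (t.card : ℂ)) • ∑ j ∈ t, v j‖ ^ 2
      ≤ ∑ k ∈ t, ‖v k - w‖ ^ 2 := by
  set c : H := (1 / (t.card : ℂ)) • ∑ j ∈ t, v j with hc
  have hcard : ((t.card : ℂ)) ≠ 0 := by
    exact_mod_cast Nat.cast_ne_zero.mpr (Finset.card_ne_zero_of_mem ht.choose_spec)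
  have hsum : ∑ k ∈ t, (v k - c) = 0 := by
    rw [Finset.sum_sub_distrib, Finset.sum_const, hc,
      ← Nat.cast_smul_eq_nsmul ℂ, smul_smul, mul_one_div, div_self hcard, one_smul, sub_self]
  have key : ∀ k, ‖v k - w‖ ^ 2
      = ‖v k - c‖ ^ 2 + 2 * (⟪v k - c, c - w⟫_ℂ).re + ‖c - w‖ ^ 2 := by
    intro k
    have h : v k - w = (v k - c) + (c - w) := by abel
    rw [h, @norm_add_sq ℂ]
    rfl
  have hz : ∑ k ∈ t, 2 * (⟪v k - c, c - w⟫_ℂ).re = 0 := by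
    rw [← Finset.mul_sum, ← Complex.re_sum, ← sum_inner, hsum]
    simp
  have heq : ∑ k ∈ t, ‖v k - w‖ ^ 2
      = ∑ k ∈ t, ‖v k - c‖ ^ 2 + (t.card : ℝ) * ‖c - w‖ ^ 2 := by
    simp only [key]
    rw [Finset.sum_add_distrib, Finset.sum_add_distrib, hz, add_zero,
      Finset.sum_const, nsmul_eq_mul]
  have hpos : 0 ≤ (t.card : ℝ) * ‖c - w‖ ^ 2 := by positivity
  linarith

theorem mellin_gruss_approx {H : Type*} [NormedAddCommGroup H] [InnerProductSpace ℂ H]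
    (n : ℕ) (hn : 1 ≤ n) (x y : ℕ → H) (m : ℕ) (hm : m ∈ Finset.Icc 1 n)
    (a b : H) (r s : ℝ) (hr : 0 ≤ r) (hs : 0 ≤ s)
    (hx : ∀ k ∈ Finset.Icc 1 n, ‖x k - a‖ ≤ r)
    (hy : ∀ k ∈ Finset.Icc 1 n, ‖((k : ℂ) ^ (m - 1)) • y k - b‖ ≤ s) :
    ‖(∑ k ∈ Finset.Icc 1 n, ((k : ℂ) ^ (m - 1)) * ⟪x k, y k⟫_ℂ
          - ⟪(1 / (n : ℂ)) • ∑ k ∈ Finset.Icc 1 n, x k,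
              ∑ k ∈ Finset.Icc 1 n, ((k : ℂ) ^ (m - 1)) • y k⟫_ℂ)‖
      ≤ (n : ℝ) * r * s := by
  set t : Finset ℕ := Finset.Icc 1 n with ht
  have hcardt : t.card = n := by simp [ht]
  have htne : t.Nonempty := ⟨1, by simp [ht]; omega⟩
  set u : ℕ → H := fun k => ((k : ℂ) ^ (m - 1)) • y k with hu
  set c : H := (1 / (n : ℂ)) • ∑ j ∈ t, x j with hc
  set d : H := (1 / (n : ℂ)) • ∑ j ∈ t, u j with hd
  have hncast : ((n : ℂ)) ≠ 0 := Nat.cast_ne_zero.mpr (by omega)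
  have hsumx : ∑ j ∈ t, x j = (n : ℂ) • c := by
    rw [hc, smul_smul]; field_simp; rw [one_smul]
  -- key algebraic identity
  have key : (∑ k ∈ t, ((k : ℂ) ^ (m - 1)) * ⟪x k, y k⟫_ℂ - ⟪c, ∑ k ∈ t, u k⟫_ℂ)
      = ∑ k ∈ t, ⟪x k - c, u k - d⟫_ℂ := by
    have h1 : ∀ k, ⟪x k - c, u k - d⟫_ℂ
        = ⟪x k, u k⟫_ℂ - ⟪x k, d⟫_ℂ - ⟪c, u k⟫_ℂ + ⟪c, d⟫_ℂ := by
      intro k; rw [inner_sub_left, inner_sub_right, inner_sub_right]; ring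
    have h2 : ∀ k, ⟪x k, u k⟫_ℂ = ((k : ℂ) ^ (m - 1)) * ⟪x k, y k⟫_ℂ := by
      intro k; rw [hu, inner_smul_right]
    simp only [h1, h2]
    rw [Finset.sum_add_distrib, Finset.sum_sub_distrib, Finset.sum_sub_distrib,
      ← sum_inner, ← inner_sum, hsumx, inner_smul_left, Finset.sum_const, hcardt,
      nsmul_eq_mul, inner_smul_left, Complex.conj_natCast]
    ring
  rw [key]
  -- bound by Cauchy-Schwarz
  have step1 : ‖∑ k ∈ t, ⟪x k - c, u k - d⟫_ℂ‖
      ≤ ∑ k ∈ t, ‖x k - c‖ * ‖u k - d‖ := by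
    exact (norm_sum_le _ _).trans (Finset.sum_le_sum fun k _ => norm_inner_le_norm _ _)
  refine step1.trans ?_
  refine (Real.sum_mul_le_sqrt_mul_sqrt t _ _).trans ?_
  have hvx : ∑ k ∈ t, ‖x k - c‖ ^ 2 ≤ (n : ℝ) * r ^ 2 := by
    have h := mean_min_sq_dist t htne x a
    rw [hcardt] at h
    refine h.trans ?_
    calc ∑ k ∈ t, ‖x k - a‖ ^ 2 ≤ ∑ k ∈ t, r ^ 2 :=
          Finset.sum_le_sum fun k hk => pow_le_pow_left₀ (norm_nonneg _) (hx k hk) 2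
      _ = (n : ℝ) * r ^ 2 := by rw [Finset.sum_const, hcardt, nsmul_eq_mul]
  have hvy : ∑ k ∈ t, ‖u k - d‖ ^ 2 ≤ (n : ℝ) * s ^ 2 := by
    have h := mean_min_sq_dist t htne u b
    rw [hcardt] at h
    refine h.trans ?_
    calc ∑ k ∈ t, ‖u k - b‖ ^ 2 ≤ ∑ k ∈ t, s ^ 2 :=
          Finset.sum_le_sum fun k hk => pow_le_pow_left₀ (norm_nonneg _) (hy k hk) 2
      _ = (n : ℝ) * s ^ 2 := by rw [Finset.sum_const, hcardt, nsmul_eq_mul]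
  have hn0 : (0 : ℝ) ≤ (n : ℝ) := Nat.cast_nonneg n
  calc Real.sqrt (∑ k ∈ t, ‖x k - c‖ ^ 2) * Real.sqrt (∑ k ∈ t, ‖u k - d‖ ^ 2)
      ≤ Real.sqrt ((n : ℝ) * r ^ 2) * Real.sqrt ((n : ℝ) * s ^ 2) :=
        mul_le_mul (Real.sqrt_le_sqrt hvx) (Real.sqrt_le_sqrt hvy)
          (Real.sqrt_nonneg _) (Real.sqrt_nonneg _)
    _ = (n : ℝ) * r * s := by
        rw [Real.sqrt_mul hn0, Real.sqrt_mul hn0, Real.sqrt_sq hr, Real.sqrt_sq hs,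
          show Real.sqrt n * r * (Real.sqrt n * s) = (Real.sqrt n * Real.sqrt n) * r * s by ring,
          Real.mul_self_sqrt hn0]
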